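/- arXiv:1612.04452 — 3 statements merged into one kernel-verified Lean document; each statement's English description precedes it below -/
import Mathlib

section
/- Let (Ω, F, P) be a probability space, G ⊆ F a sub-σ-algebra, and f ∈ L¹(Ω). Then the conditional expectation E[f|G] is submajorized by f in the Hardy–Littlewood sense: for every s > 0, ∫₀^s μ(u, E[f|G]) du ≤ ∫₀^s μ(u, f) du. -/
open MeasureTheory Set
open scoped ENNReal

/-- Decreasing rearrangement of `f` with respect to the measure `ν`. -/
noncomputable def decRearr {α : Type*} [MeasurableSpace α] (ν : Measure α)
    (f : α → ℝ) (t : ℝ) : ℝ :=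
  sInf {s : ℝ | 0 < s ∧ ν {u | s < |f u|} ≤ ENNReal.ofReal t}

namespace DecRearrAux

variable {Ω : Type*} [MeasurableSpace Ω] (P : Measure Ω) (f : Ω → ℝ)

/-- The distribution function of `|f|`. -/
noncomputable def dd (t : ℝ) : ℝ≥0∞ := P {x | t < |f x|}

lemma dd_antitone : Antitone (dd P f) := fun a b hab =>
  measure_mono fun x hx => lt_of_le_of_lt hab hx

variable {P f}

lemma dd_ne_top [IsFiniteMeasure P] (t : ℝ) : dd P f t ≠ ⊤ := measure_ne_top _ _

lemma bddBelow_S {u : ℝ} :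
    BddBelow {s : ℝ | 0 < s ∧ dd P f s ≤ ENNReal.ofReal u} :=
  ⟨0, fun s hs => hs.1.le⟩

lemma S_nonempty (hf : Integrable f P) {u : ℝ} (hu : 0 < u) :
    {s : ℝ | 0 < s ∧ dd P f s ≤ ENNReal.ofReal u}.Nonempty := by
  set I := ∫⁻ x, ENNReal.ofReal |f x| ∂P with hI
  have hIfin : I ≠ ⊤ := by
    have h2 := hf.2
    rw [HasFiniteIntegral] at h2
    refine ne_of_lt (lt_of_le_of_lt (le_of_eq ?_) h2)
    refine lintegral_congr fun x => ?_
    rw [← ofReal_norm, Real.norm_eq_abs]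
  refine ⟨I.toReal / u + 1, ⟨by positivity, ?_⟩⟩
  set s : ℝ := I.toReal / u + 1 with hs
  have hspos : (0:ℝ) < s := by positivity
  have markov : ENNReal.ofReal s * P {x | ENNReal.ofReal s ≤ ENNReal.ofReal |f x|} ≤ I :=
    mul_meas_ge_le_lintegral₀ (by
      have : AEMeasurable f P := hf.aemeasurable
      exact (ENNReal.measurable_ofReal.comp_aemeasurable
        (measurable_abs.comp_aemeasurable this))) _
  have hsub : dd P f s ≤ P {x | ENNReal.ofReal s ≤ ENNReal.ofReal |f x|} :=
    measure_mono fun x hx => ENNReal.ofReal_le_ofReal (le_of_lt hx)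
  have h1 : ENNReal.ofReal s * dd P f s ≤ I :=
    le_trans (mul_le_mul_right hsub _) markov
  have h2 : I ≤ ENNReal.ofReal u * ENNReal.ofReal s := by
    rw [← ENNReal.ofReal_mul hu.le]
    have : I.toReal ≤ u * s := by
      have husI : u * s = I.toReal + u := by
        rw [hs]; field_simp
      rw [husI]
      linarith
    calc I = ENNReal.ofReal I.toReal := (ENNReal.ofReal_toReal hIfin).symm
      _ ≤ ENNReal.ofReal (u * s) := ENNReal.ofReal_le_ofReal this
  have h3 : ENNReal.ofReal s * dd P f s ≤ ENNReal.ofReal s * ENNReal.ofReal u := by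
    refine le_trans h1 (le_trans h2 ?_)
    rw [mul_comm]
  exact (ENNReal.mul_le_mul_iff_right (by simp [hspos]) ENNReal.ofReal_ne_top).1 h3

lemma decRearr_nonneg {u : ℝ} : 0 ≤ decRearr P f u :=
  Real.sInf_nonneg fun s hs => hs.1.le

lemma dd_eq_iSup (t : ℝ) : dd P f t = ⨆ n : ℕ, dd P f (t + 1 / (n + 1)) := by
  have hUnion : {x | t < |f x|} = ⋃ n : ℕ, {x | t + 1 / (n + 1) < |f x|} := by
    ext x
    simp only [mem_setOf_eq, mem_iUnion]
    constructor
    · intro hx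
      obtain ⟨n, hn⟩ := exists_nat_one_div_lt (sub_pos.2 hx)
      exact ⟨n, by linarith⟩
    · rintro ⟨n, hn⟩
      have : (0:ℝ) < 1 / (n + 1) := by positivity
      linarith
  have hmono : Monotone fun n : ℕ => {x | t + 1 / (n + 1 : ℝ) < |f x|} := by
    intro m n hmn x hx
    simp only [mem_setOf_eq] at hx ⊢
    have h1 : (1 : ℝ) / (n + 1) ≤ 1 / (m + 1) := by
      apply one_div_le_one_div_of_le (by positivity)
      exact_mod_cast add_le_add_left (Nat.cast_le.2 hmn) 1
    linarith
  rw [dd, hUnion, Directed.measure_iUnion hmono.directed_le]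
  rfl

lemma decRearr_le_iff [IsFiniteMeasure P] (hf : Integrable f P) {u : ℝ} (hu : 0 < u)
    {l : ℝ} (hl : 0 < l) :
    decRearr P f u ≤ l ↔ dd P f l ≤ ENNReal.ofReal u := by
  constructor
  · intro H
    rw [dd_eq_iSup]
    refine iSup_le fun n => ?_
    have hpos : (0:ℝ) < 1 / (n + 1) := by positivity
    have hlt : decRearr P f u < l + 1 / (n + 1) := lt_of_le_of_lt H (by linarith)
    obtain ⟨s, hsS, hsl⟩ := (csInf_lt_iff bddBelow_S (S_nonempty hf hu)).1 hlt
    exact le_trans (dd_antitone P f hsl.le) hsS.2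
  · intro H
    exact csInf_le bddBelow_S ⟨hl, H⟩

lemma decRearr_anti [IsFiniteMeasure P] (hf : Integrable f P) {u v : ℝ}
    (hu : 0 < u) (huv : u ≤ v) : decRearr P f v ≤ decRearr P f u := by
  refine csInf_le_csInf bddBelow_S (S_nonempty hf hu) fun s hs => ?_
  exact ⟨hs.1, le_trans hs.2 (ENNReal.ofReal_le_ofReal huv)⟩

lemma ofReal_lt_dd [IsFiniteMeasure P] (hf : Integrable f P) {u : ℝ} (hu : 0 < u)
    {l : ℝ} (hl : 0 < l) (hlu : l < decRearr P f u) :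
    ENNReal.ofReal u < dd P f l := by
  by_contra hc
  rw [not_lt] at hc
  exact absurd ((decRearr_le_iff hf hu hl).2 hc) (not_le.2 hlu)

lemma indicator_measurable [IsFiniteMeasure P] (hf : Integrable f P) (s : ℝ) :
    Measurable ((Set.Ioo (0:ℝ) s).indicator (decRearr P f)) := by
  apply measurable_of_Iio
  intro a
  have hA : MeasurableSet {u : ℝ | u ∈ Ioo (0:ℝ) s ∧ decRearr P f u < a} := by
    apply Set.OrdConnected.measurableSet
    constructor
    intro x hx y hy z hz
    refine ⟨⟨hx.1.1.trans_le hz.1, lt_of_le_of_lt hz.2 hy.1.2⟩, ?_⟩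
    exact lt_of_le_of_lt (decRearr_anti hf hx.1.1 hz.1) hx.2
  have hset : (Set.Ioo (0:ℝ) s).indicator (decRearr P f) ⁻¹' Iio a =
      {u : ℝ | u ∈ Ioo (0:ℝ) s ∧ decRearr P f u < a} ∪
        (if 0 < a then (Ioo (0:ℝ) s)ᶜ else ∅) := by
    ext u
    constructor
    · intro hmem
      rw [mem_preimage, mem_Iio] at hmem
      by_cases hu : u ∈ Ioo (0:ℝ) s
      · exact mem_union_left _ ⟨hu, by rwa [Set.indicator_of_mem hu] at hmem⟩
      · rw [Set.indicator_of_notMem hu] at hmem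
        rw [if_pos hmem]
        exact mem_union_right _ hu
    · intro hmem
      rw [mem_preimage, mem_Iio]
      rcases hmem with h | h
      · rw [Set.indicator_of_mem h.1]; exact h.2
      · by_cases ha : (0:ℝ) < a
        · rw [if_pos ha] at h
          rw [Set.indicator_of_notMem h]; exact ha
        · rw [if_neg ha] at h; exact absurd h (notMem_empty u)
  rw [hset]
  refine hA.union ?_
  split_ifs
  · exact measurableSet_Ioo.compl
  · exact MeasurableSet.empty

lemma aemeasurable_decRearr [IsFiniteMeasure P] (hf : Integrable f P) (s : ℝ) :
    AEMeasurable (decRearr P f) (volume.restrict (Ioo (0:ℝ) s)) := by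
  refine ⟨(Set.Ioo (0:ℝ) s).indicator (decRearr P f), indicator_measurable hf s, ?_⟩
  exact (ae_restrict_iff' measurableSet_Ioo).2
    (ae_of_all _ fun u hu => (Set.indicator_of_mem hu _).symm)

lemma lintegral_decRearr [IsFiniteMeasure P] (hf : Integrable f P) {s : ℝ} (hs : 0 < s) :
    ∫⁻ u in Ioo (0:ℝ) s, ENNReal.ofReal (decRearr P f u) =
      ∫⁻ t in Ioi (0:ℝ), min (dd P f t) (ENNReal.ofReal s) := by
  rw [lintegral_eq_lintegral_meas_lt _ (ae_of_all _ fun u => decRearr_nonneg)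
    (aemeasurable_decRearr hf s)]
  refine setLIntegral_congr_fun measurableSet_Ioi (fun t ht => ?_)
  rw [Measure.restrict_apply' measurableSet_Ioo]
  have hIoo : {u : ℝ | t < decRearr P f u} ∩ Ioo 0 s =
      Ioo 0 (min (dd P f t).toReal s) := by
    ext u
    simp only [mem_inter_iff, mem_setOf_eq, mem_Ioo, lt_min_iff]
    constructor
    · rintro ⟨h1, h2, h3⟩
      refine ⟨h2, ?_, h3⟩
      have := ofReal_lt_dd hf h2 ht h1
      exact (ENNReal.ofReal_lt_iff_lt_toReal h2.le (dd_ne_top t)).1 this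
    · rintro ⟨h2, h4, h3⟩
      refine ⟨?_, h2, h3⟩
      have hlt : ENNReal.ofReal u < dd P f t :=
        (ENNReal.ofReal_lt_iff_lt_toReal h2.le (dd_ne_top t)).2 h4
      by_contra hc
      rw [not_lt] at hc
      exact absurd ((decRearr_le_iff hf h2 ht).1 hc) (not_le.2 hlt)
  rw [hIoo, Real.volume_Ioo, sub_zero]
  have hmin : ENNReal.ofReal (min (dd P f t).toReal s) =
      min (ENNReal.ofReal (dd P f t).toReal) (ENNReal.ofReal s) :=
    Monotone.map_min fun _ _ h => ENNReal.ofReal_le_ofReal h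
  rw [hmin, ENNReal.ofReal_toReal (dd_ne_top t)]

lemma lintegral_dd_Ioi [IsFiniteMeasure P] (hmf : AEMeasurable f P) {c : ℝ} (hc : 0 ≤ c) :
    ∫⁻ t in Ioi c, dd P f t = ∫⁻ x, ENNReal.ofReal (max (|f x| - c) 0) ∂P := by
  have hφm : AEMeasurable (fun x => max (|f x| - c) 0) P :=
    ((measurable_abs.comp_aemeasurable hmf).sub aemeasurable_const).max aemeasurable_const
  have hnn : 0 ≤ᵐ[P] fun x => max (|f x| - c) 0 :=
    ae_of_all _ fun x => le_max_right _ _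
  rw [lintegral_eq_lintegral_meas_lt P hnn hφm]
  have htrans : ∫⁻ t in Ioi (0:ℝ), dd P f (t + c) = ∫⁻ t in Ioi c, dd P f t := by
    have := (measurePreserving_add_right volume c).setLIntegral_comp_emb
      (MeasurableEquiv.addRight c).measurableEmbedding (dd P f) (Ioi 0)
    rw [this, Set.image_add_const_Ioi, zero_add]
  rw [← htrans]
  refine (setLIntegral_congr_fun measurableSet_Ioi (fun t ht => ?_)).symm
  have ht0 : (0:ℝ) < t := ht
  congr 1
  ext x
  simp only [mem_setOf_eq, lt_max_iff]
  constructor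
  · rintro (h | h)
    · linarith
    · linarith
  · intro h
    left
    linarith

end DecRearrAux

open DecRearrAux

theorem stmt_11 {Ω : Type*} {m0 : MeasurableSpace Ω} (P : Measure Ω)
    [IsProbabilityMeasure P] (G : MeasurableSpace Ω) (hG : G ≤ m0)
    (f : Ω → ℝ) (hf : Integrable f P) :
    ∀ s > (0:ℝ),
      ∫ u in Set.Ioo (0:ℝ) s, @decRearr Ω m0 P (P[f|G]) u ≤
        ∫ u in Set.Ioo (0:ℝ) s, @decRearr Ω m0 P f u := by
  intro s hs
  letI : MeasurableSpace Ω := m0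
  haveI : SigmaFinite (P.trim hG) := by
    haveI := isFiniteMeasure_trim hG (μ := P)
    infer_instance
  set g : Ω → ℝ := P[f|G] with hgdef
  have hgi : Integrable g P := integrable_condExp
  set c : ℝ := decRearr P f s with hcdef
  have hc : (0:ℝ) ≤ c := by rw [hcdef]; exact decRearr_nonneg
  -- the truncated functions
  set φf : Ω → ℝ := fun x => max (|f x| - c) 0 with hφf
  set φg : Ω → ℝ := fun x => max (|g x| - c) 0 with hφg
  have hφfi : Integrable φf P := by
    have := (hf.abs.sub (integrable_const c)).pos_part
    simpa [hφf, Pi.sub_apply] using this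
  have hφgi : Integrable φg P := by
    have := (hgi.abs.sub (integrable_const c)).pos_part
    simpa [hφg, Pi.sub_apply] using this
  -- conditional expectation comparison of truncations
  have hcond : ∫ x, φg x ∂P ≤ ∫ x, φf x ∂P := by
    have habs : ∀ᵐ x ∂P, |g x| ≤ (P[(fun y => |f y|)|G]) x := by
      have h1 : P[f|G] ≤ᵐ[P] P[(fun y => |f y|)|G] :=
        condExp_mono hf hf.abs (ae_of_all _ fun x => le_abs_self _)
      have h2 : P[-f|G] ≤ᵐ[P] P[(fun y => |f y|)|G] :=
        condExp_mono hf.neg hf.abs (ae_of_all _ fun x => neg_le_abs _)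
      have h3 : P[-f|G] =ᵐ[P] -P[f|G] := condExp_neg f G
      filter_upwards [h1, h2, h3] with x h1x h2x h3x
      rw [abs_le]
      have h4 : -(P[f|G]) x ≤ (P[(fun y => |f y|)|G]) x := by
        have h5 := h3x ▸ h2x
        simpa using h5
      exact ⟨by linarith, h1x⟩
    have hsub : P[(fun y => |f y| - c)|G] =ᵐ[P] fun x => (P[(fun y => |f y|)|G]) x - c := by
      have h4 : P[(fun y => |f y| - c)|G] =ᵐ[P] P[(fun y => |f y|)|G] - P[fun _ => c|G] :=
        condExp_sub hf.abs (integrable_const c) G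
      have h5 : P[fun _ : Ω => c|G] = fun _ => c := condExp_const hG c
      filter_upwards [h4] with x h4
      rw [h4]
      simp [h5]
    have hmono : P[(fun y => |f y| - c)|G] ≤ᵐ[P] P[φf|G] :=
      condExp_mono (hf.abs.sub (integrable_const c)) hφfi
        (ae_of_all _ fun x => le_max_left _ _)
    have hnn : 0 ≤ᵐ[P] P[φf|G] :=
      condExp_nonneg (ae_of_all _ fun x => le_max_right _ _)
    have key : φg ≤ᵐ[P] P[φf|G] := by
      filter_upwards [habs, hsub, hmono, hnn] with x habs hsub hmono hnn
      rw [hφg]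
      simp only [max_le_iff]
      refine ⟨?_, hnn⟩
      have : (P[(fun y => |f y|)|G]) x - c ≤ (P[φf|G]) x := by
        rw [← hsub]; exact hmono
      linarith [habs]
    calc ∫ x, φg x ∂P ≤ ∫ x, (P[φf|G]) x ∂P :=
          integral_mono_ae hφgi integrable_condExp key
      _ = ∫ x, φf x ∂P := integral_condExp hG
  -- lintegral versions of truncations
  have hTg : ∫⁻ t in Ioi c, dd P g t = ∫⁻ x, ENNReal.ofReal (φg x) ∂P :=
    lintegral_dd_Ioi hgi.aemeasurable hc
  have hTf : ∫⁻ t in Ioi c, dd P f t = ∫⁻ x, ENNReal.ofReal (φf x) ∂P :=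
    lintegral_dd_Ioi hf.aemeasurable hc
  have hT : ∫⁻ x, ENNReal.ofReal (φg x) ∂P ≤ ∫⁻ x, ENNReal.ofReal (φf x) ∂P := by
    rw [← ofReal_integral_eq_lintegral_ofReal hφgi (ae_of_all _ fun x => le_max_right _ _),
      ← ofReal_integral_eq_lintegral_ofReal hφfi (ae_of_all _ fun x => le_max_right _ _)]
    exact ENNReal.ofReal_le_ofReal hcond
  -- split Ioi 0 = Ioc 0 c ∪ Ioi c
  have hsplit : ∀ h : Ω → ℝ,
      ∫⁻ t in Ioi (0:ℝ), min (dd P h t) (ENNReal.ofReal s) =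
        (∫⁻ t in Ioc (0:ℝ) c, min (dd P h t) (ENNReal.ofReal s)) +
          ∫⁻ t in Ioi c, min (dd P h t) (ENNReal.ofReal s) := by
    intro h
    rw [← lintegral_union measurableSet_Ioi (Set.Ioc_disjoint_Ioi le_rfl),
      Set.Ioc_union_Ioi_eq_Ioi hc]
  -- upper bound (used for g, and for finiteness with f)
  have hbound : ∀ h : Ω → ℝ,
      ∫⁻ t in Ioi (0:ℝ), min (dd P h t) (ENNReal.ofReal s) ≤
        ENNReal.ofReal s * ENNReal.ofReal c + ∫⁻ t in Ioi c, dd P h t := by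
    intro h
    rw [hsplit h]
    refine add_le_add ?_ (lintegral_mono fun t => min_le_left _ _)
    calc ∫⁻ t in Ioc (0:ℝ) c, min (dd P h t) (ENNReal.ofReal s)
        ≤ ∫⁻ _ in Ioc (0:ℝ) c, ENNReal.ofReal s :=
          lintegral_mono fun t => min_le_right _ _
      _ = ENNReal.ofReal s * ENNReal.ofReal c := by
          rw [setLIntegral_const, Real.volume_Ioc, sub_zero]
  -- lower bound for f
  have hlower : ENNReal.ofReal s * ENNReal.ofReal c + ∫⁻ t in Ioi c, dd P f t ≤
      ∫⁻ t in Ioi (0:ℝ), min (dd P f t) (ENNReal.ofReal s) := by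
    rw [hsplit f]
    refine add_le_add ?_ ?_
    · have heq : ∫⁻ t in Ioo (0:ℝ) c, min (dd P f t) (ENNReal.ofReal s) =
          ∫⁻ _ in Ioo (0:ℝ) c, ENNReal.ofReal s := by
        refine setLIntegral_congr_fun measurableSet_Ioo (fun t ht => ?_)
        have htc : t < decRearr P f s := by rw [← hcdef]; exact ht.2
        have : ENNReal.ofReal s < dd P f t := ofReal_lt_dd hf hs ht.1 htc
        exact min_eq_right this.le
      calc ENNReal.ofReal s * ENNReal.ofReal c
          = ∫⁻ _ in Ioo (0:ℝ) c, ENNReal.ofReal s := by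
            rw [setLIntegral_const, Real.volume_Ioo, sub_zero]
        _ = ∫⁻ t in Ioo (0:ℝ) c, min (dd P f t) (ENNReal.ofReal s) := heq.symm
        _ ≤ ∫⁻ t in Ioc (0:ℝ) c, min (dd P f t) (ENNReal.ofReal s) :=
            lintegral_mono_set Set.Ioo_subset_Ioc_self
    · refine le_of_eq (setLIntegral_congr_fun measurableSet_Ioi
        (fun t ht => ?_)).symm
      have htpos : (0:ℝ) < t := lt_of_le_of_lt hc ht
      have : dd P f t ≤ ENNReal.ofReal s :=
        (decRearr_le_iff hf hs htpos).1 (le_of_lt ht)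
      exact min_eq_left this
  -- main chain in ℝ≥0∞
  have hchain : ∫⁻ u in Ioo (0:ℝ) s, ENNReal.ofReal (decRearr P g u) ≤
      ∫⁻ u in Ioo (0:ℝ) s, ENNReal.ofReal (decRearr P f u) := by
    rw [lintegral_decRearr hgi hs, lintegral_decRearr hf hs]
    calc ∫⁻ t in Ioi (0:ℝ), min (dd P g t) (ENNReal.ofReal s)
        ≤ ENNReal.ofReal s * ENNReal.ofReal c + ∫⁻ t in Ioi c, dd P g t := hbound g
      _ = ENNReal.ofReal s * ENNReal.ofReal c + ∫⁻ x, ENNReal.ofReal (φg x) ∂P := by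
          rw [hTg]
      _ ≤ ENNReal.ofReal s * ENNReal.ofReal c + ∫⁻ x, ENNReal.ofReal (φf x) ∂P :=
          add_le_add le_rfl hT
      _ = ENNReal.ofReal s * ENNReal.ofReal c + ∫⁻ t in Ioi c, dd P f t := by
          rw [hTf]
      _ ≤ ∫⁻ t in Ioi (0:ℝ), min (dd P f t) (ENNReal.ofReal s) := hlower
  -- finiteness of the f-side
  have hfin : ∫⁻ u in Ioo (0:ℝ) s, ENNReal.ofReal (decRearr P f u) ≠ ⊤ := by
    rw [lintegral_decRearr hf hs]
    refine ne_of_lt (lt_of_le_of_lt (hbound f) ?_)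
    rw [hTf, ← ofReal_integral_eq_lintegral_ofReal hφfi
      (ae_of_all _ fun x => le_max_right _ _)]
    exact ENNReal.add_lt_top.2 ⟨ENNReal.mul_lt_top ENNReal.ofReal_lt_top ENNReal.ofReal_lt_top,
      ENNReal.ofReal_lt_top⟩
  -- convert to Bochner integrals
  have hgm : AEStronglyMeasurable (decRearr P g) (volume.restrict (Ioo (0:ℝ) s)) :=
    (aemeasurable_decRearr hgi s).aestronglyMeasurable
  have hfm : AEStronglyMeasurable (decRearr P f) (volume.restrict (Ioo (0:ℝ) s)) :=
    (aemeasurable_decRearr hf s).aestronglyMeasurable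
  rw [integral_eq_lintegral_of_nonneg_ae (ae_of_all _ fun u => decRearr_nonneg) hgm,
    integral_eq_lintegral_of_nonneg_ae (ae_of_all _ fun u => decRearr_nonneg) hfm]
  exact ENNReal.toReal_mono hfin hchain
end

section
/- Let f, g be nonnegative measurable functions on a σ-finite measure space with f, g ∈ L₁ + L_∞. Then g is submajorized by f (i.e. ∫₀^s μ(u,g) du ≤ ∫₀^s μ(u,f) du for all s > 0) if and only if ∫ (g − t)₊ ≤ ∫ (f − t)₊ for all t > 0. -/
open MeasureTheory

open Set
open scoped ENNReal NNReal

namespace StmtAux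

variable {α : Type*} [MeasurableSpace α] (μ : Measure α)

noncomputable def D (h : α → ℝ) (s : ℝ) : ℝ≥0∞ := μ {x | s < h x}

variable {h : α → ℝ}

theorem decRearr_eq (h0 : ∀ x, 0 ≤ h x) (u : ℝ) :
    decRearr μ h u = sInf {s : ℝ | 0 < s ∧ D μ h s ≤ ENNReal.ofReal u} := by
  have : ∀ x, |h x| = h x := fun x => abs_of_nonneg (h0 x)
  simp only [decRearr, D, this]

theorem D_anti : Antitone (D μ h) := fun _ _ hst =>
  measure_mono (fun _ hx => lt_of_le_of_lt hst hx)

theorem D_rightCont {c : ℝ≥0∞} {s : ℝ} (hc : ∀ ε > (0:ℝ), D μ h (s + ε) ≤ c) :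
    D μ h s ≤ c := by
  have hU : {x | s < h x} = ⋃ n : ℕ, {x | s + 1 / (n + 1) < h x} := by
    ext x
    simp only [mem_setOf_eq, mem_iUnion]
    constructor
    · intro hx
      obtain ⟨n, hn⟩ := exists_nat_one_div_lt (show (0:ℝ) < h x - s by linarith)
      exact ⟨n, by linarith⟩
    · rintro ⟨n, hn⟩
      have : (0:ℝ) < 1 / (n + 1) := by positivity
      linarith
  have hmono : Monotone fun n : ℕ => {x | s + 1 / (n + 1 : ℝ) < h x} := by
    intro n m hnm x hx
    simp only [mem_setOf_eq] at hx ⊢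
    have h1 : (1:ℝ) / (m + 1) ≤ 1 / (n + 1) := by
      apply one_div_le_one_div_of_le (by positivity)
      exact_mod_cast by omega
    linarith
  have : D μ h s = ⨆ n : ℕ, D μ h (s + 1 / (n + 1)) := by
    unfold D; rw [hU]; exact hmono.measure_iUnion
  rw [this]
  exact iSup_le fun n => hc _ (by positivity)

section char

variable (h0 : ∀ x, 0 ≤ h x)
  (hne : ∀ u : ℝ, 0 < u → ∃ r : ℝ, 0 < r ∧ D μ h r ≤ ENNReal.ofReal u)

include h0 hne

theorem rearr_le_iff {u s : ℝ} (hu : 0 < u) (hs : 0 < s) :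
    decRearr μ h u ≤ s ↔ D μ h s ≤ ENNReal.ofReal u := by
  rw [decRearr_eq μ h0]
  set S := {s : ℝ | 0 < s ∧ D μ h s ≤ ENNReal.ofReal u} with hS
  have hSne : S.Nonempty := by
    obtain ⟨r, hr1, hr2⟩ := hne u hu
    exact ⟨r, hr1, hr2⟩
  constructor
  · intro hle
    apply D_rightCont
    intro ε hε
    obtain ⟨r, hrS, hrlt⟩ := exists_lt_of_csInf_lt hSne (show sInf S < s + ε from lt_of_le_of_lt hle (by linarith))
    exact le_trans (D_anti μ hrlt.le) hrS.2
  · intro hD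
    exact csInf_le ⟨0, fun r hr => hr.1.le⟩ ⟨hs, hD⟩

theorem rearr_lt_iff {u s : ℝ} (hu : 0 < u) (hs : 0 < s) :
    s < decRearr μ h u ↔ ENNReal.ofReal u < D μ h s := by
  rw [← not_le, ← not_le, rearr_le_iff μ h0 hne hu hs]

omit h0 hne in
theorem rearr_nonneg (u : ℝ) : 0 ≤ decRearr μ h u := by
  apply Real.sInf_nonneg
  rintro r ⟨hr, -⟩
  exact hr.le

theorem rearr_anti {u v : ℝ} (hu : 0 < u) (huv : u ≤ v) :
    decRearr μ h v ≤ decRearr μ h u := by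
  have hv : 0 < v := lt_of_lt_of_le hu huv
  have key : ∀ s : ℝ, 0 < s → decRearr μ h u ≤ s → decRearr μ h v ≤ s := by
    intro s hs hle
    rw [rearr_le_iff μ h0 hne hu hs] at hle
    rw [rearr_le_iff μ h0 hne hv hs]
    exact hle.trans (ENNReal.ofReal_le_ofReal huv)
  apply le_of_forall_pos_le_add
  intro ε hε
  exact key _ (by linarith [rearr_nonneg μ (h := h) u]) (by linarith)

/-- The superlevel set of the rearrangement is an interval. -/
theorem rearr_set_eq {s : ℝ} (hs : 0 < s) :
    ({u : ℝ | s < decRearr μ h u} ∩ Ioi 0 = Ioi 0 ∧ D μ h s = ∞) ∨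
      ({u : ℝ | s < decRearr μ h u} ∩ Ioi 0 = Ioo 0 (D μ h s).toReal ∧ D μ h s ≠ ∞) := by
  rcases eq_or_ne (D μ h s) ∞ with hD | hD
  · left
    refine ⟨?_, hD⟩
    ext u
    simp only [mem_inter_iff, mem_setOf_eq, mem_Ioi]
    constructor
    · exact fun hx => hx.2
    · intro hu
      refine ⟨?_, hu⟩
      rw [rearr_lt_iff μ h0 hne hu hs, hD]
      exact ENNReal.ofReal_lt_top
  · right
    refine ⟨?_, hD⟩
    ext u
    simp only [mem_inter_iff, mem_setOf_eq, mem_Ioi, mem_Ioo]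
    constructor
    · rintro ⟨h1, h2⟩
      refine ⟨h2, ?_⟩
      rw [← ENNReal.ofReal_lt_iff_lt_toReal h2.le hD]
      exact (rearr_lt_iff μ h0 hne h2 hs).mp h1
    · rintro ⟨h2, h1⟩
      refine ⟨?_, h2⟩
      rw [rearr_lt_iff μ h0 hne h2 hs]
      exact (ENNReal.ofReal_lt_iff_lt_toReal h2.le hD).mpr h1

theorem equimeas {s : ℝ} (hs : 0 < s) :
    volume ({u : ℝ | s < decRearr μ h u} ∩ Ioi 0) = D μ h s := by
  rcases rearr_set_eq μ h0 hne hs with ⟨heq, hD⟩ | ⟨heq, hD⟩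
  · rw [heq, hD, Real.volume_Ioi]
  · rw [heq, Real.volume_Ioo, sub_zero, ENNReal.ofReal_toReal hD]

theorem rearr_meas_set {s : ℝ} (hs : 0 < s) :
    MeasurableSet ({u : ℝ | s < decRearr μ h u} ∩ Ioi 0) := by
  rcases rearr_set_eq μ h0 hne hs with ⟨heq, -⟩ | ⟨heq, -⟩ <;> rw [heq]
  · exact measurableSet_Ioi
  · exact measurableSet_Ioo

theorem rearr_indicator_measurable :
    Measurable (Set.indicator (Ioi (0:ℝ)) (decRearr μ h)) := by
  apply measurable_of_Ioi
  intro s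
  rcases lt_trichotomy s 0 with hs | hs | hs
  · convert MeasurableSet.univ
    ext u
    simp only [mem_preimage, mem_Ioi, mem_univ, iff_true]
    rcases em (u ∈ Ioi (0:ℝ)) with hu | hu
    · rw [indicator_of_mem hu]
      exact lt_of_lt_of_le hs (rearr_nonneg μ u)
    · rw [indicator_of_notMem hu]; exact hs
  · have : (Set.indicator (Ioi (0:ℝ)) (decRearr μ h)) ⁻¹' Ioi s =
        ⋃ n : ℕ, ({u : ℝ | 1 / (n + 1) < decRearr μ h u} ∩ Ioi 0) := by
      ext u
      simp only [mem_preimage, mem_Ioi, mem_iUnion, mem_inter_iff, mem_setOf_eq]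
      constructor
      · intro hx
        rcases em (u ∈ Ioi (0:ℝ)) with hu | hu
        · rw [indicator_of_mem hu] at hx
          rw [hs] at hx
          obtain ⟨n, hn⟩ := exists_nat_one_div_lt hx
          exact ⟨n, hn, hu⟩
        · rw [indicator_of_notMem hu, hs] at hx; exact absurd hx (lt_irrefl 0)
      · rintro ⟨n, hn, hu⟩
        rw [indicator_of_mem (mem_Ioi.mpr hu), hs]
        exact lt_trans (by positivity) hn
    rw [this]
    exact MeasurableSet.iUnion fun n => rearr_meas_set μ h0 hne (by positivity)
  · have : (Set.indicator (Ioi (0:ℝ)) (decRearr μ h)) ⁻¹' Ioi s =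
        {u : ℝ | s < decRearr μ h u} ∩ Ioi 0 := by
      ext u
      simp only [mem_preimage, mem_Ioi, mem_inter_iff, mem_setOf_eq]
      constructor
      · intro hx
        rcases em (u ∈ Ioi (0:ℝ)) with hu | hu
        · rw [indicator_of_mem hu] at hx; exact ⟨hx, hu⟩
        · rw [indicator_of_notMem hu] at hx; exact absurd hs (not_lt.mpr hx.le)
      · rintro ⟨hx, hu⟩
        rw [indicator_of_mem (mem_Ioi.mpr hu)]; exact hx
    rw [this]
    exact rearr_meas_set μ h0 hne hs

end char


section lc
variable (h0 : ∀ x, 0 ≤ h x) (hm : Measurable h)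
  (hne : ∀ u : ℝ, 0 < u → ∃ r : ℝ, 0 < r ∧ D μ h r ≤ ENNReal.ofReal u)
include h0 hm hne

theorem layercake {t : ℝ} (ht : 0 ≤ t) :
    ∫⁻ u in Ioi (0:ℝ), ENNReal.ofReal (max (decRearr μ h u - t) 0) =
      ∫⁻ x, ENNReal.ofReal (max (h x - t) 0) ∂μ := by
  have hR : ∫⁻ x, ENNReal.ofReal (max (h x - t) 0) ∂μ = ∫⁻ s in Ioi (0:ℝ), D μ h (s + t) := by
    rw [lintegral_eq_lintegral_meas_lt (f := fun x => max (h x - t) 0) μ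
      (Filter.Eventually.of_forall fun x => le_max_right _ _)
      ((hm.sub measurable_const).max measurable_const).aemeasurable]
    apply setLIntegral_congr_fun_ae measurableSet_Ioi
    apply Filter.Eventually.of_forall
    intro s hs
    show μ _ = D μ h (s + t)
    unfold D
    congr 1
    ext x
    simp only [mem_setOf_eq, lt_max_iff]
    rw [mem_Ioi] at hs
    constructor
    · rintro (h1 | h1) <;> linarith
    · intro h1; left; linarith
  have mble : AEMeasurable (fun u => max (decRearr μ h u - t) 0)
      (volume.restrict (Ioi (0:ℝ))) := by
    refine ⟨fun u => max (Set.indicator (Ioi (0:ℝ)) (decRearr μ h) u - t) 0,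
      (((rearr_indicator_measurable μ h0 hne).sub measurable_const).max measurable_const), ?_⟩
    filter_upwards [ae_restrict_mem measurableSet_Ioi] with u hu
    rw [indicator_of_mem hu]
  have hL : ∫⁻ u in Ioi (0:ℝ), ENNReal.ofReal (max (decRearr μ h u - t) 0) =
      ∫⁻ s in Ioi (0:ℝ), D μ h (s + t) := by
    rw [lintegral_eq_lintegral_meas_lt (f := fun u => max (decRearr μ h u - t) 0) _
      (Filter.Eventually.of_forall fun x => le_max_right _ _) mble]
    apply setLIntegral_congr_fun_ae measurableSet_Ioi
    apply Filter.Eventually.of_forall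
    intro s hs
    rw [mem_Ioi] at hs
    rw [Measure.restrict_apply' measurableSet_Ioi]
    have hset : {u : ℝ | s < max (decRearr μ h u - t) 0} = {u | s + t < decRearr μ h u} := by
      ext u
      simp only [mem_setOf_eq, lt_max_iff]
      constructor
      · rintro (h1 | h1) <;> linarith
      · intro h1; left; linarith
    rw [hset]
    exact equimeas μ h0 hne (by linarith)
  rw [hL, hR]

end lc

theorem tail_small (hm : Measurable h)
    (hh : ∃ h₁ h₂ : α → ℝ, h = h₁ + h₂ ∧ MemLp h₁ 1 μ ∧ MemLp h₂ ⊤ μ) :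
    ∀ u : ℝ, 0 < u → ∃ r : ℝ, 0 < r ∧ D μ h r ≤ ENNReal.ofReal u := by
  obtain ⟨h₁, h₂, heq, H1, H2⟩ := hh
  set I := ∫⁻ x, (‖h₁ x‖₊ : ℝ≥0∞) ∂μ with hI
  have hIfin : I ≠ ∞ := by
    have := H1.2
    rw [eLpNorm_one_eq_lintegral_enorm] at this
    exact this.ne
  set C := eLpNormEssSup h₂ μ with hC
  have hCfin : C ≠ ∞ := by
    have := H2.2
    rw [eLpNorm_exponent_top] at this
    exact this.ne
  intro u hu
  set ε : ℝ := I.toReal / u + 1 with hε_def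
  have hε : 0 < ε := by positivity
  refine ⟨C.toReal + ε, by positivity, ?_⟩
  have hae : ∀ᵐ x ∂μ, (‖h₂ x‖₊ : ℝ≥0∞) ≤ C := ae_le_eLpNormEssSup
  have hsub : D μ h (C.toReal + ε) ≤ μ {x | ENNReal.ofReal ε ≤ (‖h₁ x‖₊ : ℝ≥0∞)} := by
    show μ {x | C.toReal + ε < h x} ≤ _
    apply measure_mono_ae
    filter_upwards [hae] with x hx
    intro hxmem
    show ENNReal.ofReal ε ≤ (‖h₁ x‖₊ : ℝ≥0∞)
    have h2b : |h₂ x| ≤ C.toReal := by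
      have h2 : (‖h₂ x‖₊ : ℝ≥0∞).toReal ≤ C.toReal := ENNReal.toReal_mono hCfin hx
      simpa [Real.norm_eq_abs] using h2
    have hxle : h x ≤ |h₁ x| + |h₂ x| := by
      rw [heq]
      exact le_trans (le_abs_self _) (abs_add_le _ _)
    have hmem2 : C.toReal + ε < h x := hxmem
    have : ε < |h₁ x| := by linarith
    rw [← enorm_eq_nnnorm, Real.enorm_eq_ofReal_abs]
    exact ENNReal.ofReal_le_ofReal this.le
  have markov := mul_meas_ge_le_lintegral₀ (f := fun x => (‖h₁ x‖₊ : ℝ≥0∞))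
    ((H1.1.aemeasurable.nnnorm).coe_nnreal_ennreal) (ENNReal.ofReal ε)
  have hεne : ENNReal.ofReal ε ≠ 0 := by
    simp [ENNReal.ofReal_eq_zero, not_le, hε]
  have hεnt : ENNReal.ofReal ε ≠ ∞ := ENNReal.ofReal_ne_top
  have hfinal : μ {x | ENNReal.ofReal ε ≤ (‖h₁ x‖₊ : ℝ≥0∞)} ≤ ENNReal.ofReal u := by
    have h1 : μ {x | ENNReal.ofReal ε ≤ (‖h₁ x‖₊ : ℝ≥0∞)} ≤ I / ENNReal.ofReal ε := by
      rw [ENNReal.le_div_iff_mul_le (Or.inl hεne) (Or.inl hεnt), mul_comm]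
      exact markov
    refine h1.trans ?_
    rw [ENNReal.div_le_iff_le_mul (Or.inl hεne) (Or.inr (by simp [hu.le]; positivity))]
    calc I = ENNReal.ofReal I.toReal := (ENNReal.ofReal_toReal hIfin).symm
      _ ≤ ENNReal.ofReal (u * ε) := by
          apply ENNReal.ofReal_le_ofReal
          rw [hε_def]
          have : u * (I.toReal / u + 1) = I.toReal + u := by field_simp
          rw [this]; linarith
      _ = ENNReal.ofReal u * ENNReal.ofReal ε := ENNReal.ofReal_mul hu.le
  exact hsub.trans hfinal

theorem sup_Ioo (H : ℝ → ℝ≥0∞) (hH : Measurable H) :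
    ∫⁻ u in Ioi (0:ℝ), H u = ⨆ n : ℕ, ∫⁻ u in Ioo (0:ℝ) (n:ℝ), H u := by
  have h1 : ∀ n : ℕ, ∫⁻ u in Ioo (0:ℝ) (n:ℝ), H u
      = ∫⁻ u, (Ioo (0:ℝ) (n:ℝ)).indicator H u := fun n =>
    (lintegral_indicator measurableSet_Ioo H).symm
  simp_rw [h1]
  rw [← lintegral_iSup (fun n => hH.indicator measurableSet_Ioo)]
  · rw [← lintegral_indicator measurableSet_Ioi]
    congr 1
    ext u
    rcases le_or_gt u 0 with hu | hu
    · rw [indicator_of_notMem (show u ∉ Ioi (0:ℝ) by simpa using hu)]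
      symm
      rw [ENNReal.iSup_eq_zero]
      intro n
      exact indicator_of_notMem (fun h' => absurd h'.1 (not_lt.mpr hu)) _
    · rw [indicator_of_mem (mem_Ioi.mpr hu)]
      apply le_antisymm
      · obtain ⟨n, hn⟩ := exists_nat_gt u
        refine le_trans ?_ (le_iSup _ n)
        rw [indicator_of_mem (mem_Ioo.mpr ⟨hu, hn⟩)]
      · exact iSup_le fun n => indicator_le_self _ _ u
  · intro n m hnm u
    dsimp only
    rcases em (u ∈ Ioo (0:ℝ) (n:ℝ)) with hu | hu
    · rw [indicator_of_mem hu, indicator_of_mem]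
      exact mem_Ioo.mpr ⟨hu.1, lt_of_lt_of_le hu.2 (by exact_mod_cast hnm)⟩
    · rw [indicator_of_notMem hu]
      exact zero_le


theorem Astep (k : ℝ → ℝ) (s t : ℝ) (ht : 0 ≤ t) :
    ∫⁻ u in Ioo (0:ℝ) s, ENNReal.ofReal (k u) ≤
      ENNReal.ofReal s * ENNReal.ofReal t +
        ∫⁻ u in Ioi (0:ℝ), ENNReal.ofReal (max (k u - t) 0) := by
  have hpt : ∀ u, ENNReal.ofReal (k u) ≤
      ENNReal.ofReal t + ENNReal.ofReal (max (k u - t) 0) := by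
    intro u
    rw [← ENNReal.ofReal_add ht (le_max_right _ _)]
    apply ENNReal.ofReal_le_ofReal
    rcases le_or_gt (k u) t with h1 | h1
    · linarith [le_max_right (k u - t) (0:ℝ)]
    · rw [max_eq_left (by linarith)]; linarith
  calc ∫⁻ u in Ioo (0:ℝ) s, ENNReal.ofReal (k u)
      ≤ ∫⁻ u in Ioo (0:ℝ) s,
          (ENNReal.ofReal t + ENNReal.ofReal (max (k u - t) 0)) :=
        lintegral_mono fun u => hpt u
    _ = ENNReal.ofReal t * volume (Ioo (0:ℝ) s) +
          ∫⁻ u in Ioo (0:ℝ) s, ENNReal.ofReal (max (k u - t) 0) := by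
        rw [lintegral_add_left measurable_const, setLIntegral_const]
    _ ≤ ENNReal.ofReal s * ENNReal.ofReal t +
          ∫⁻ u in Ioi (0:ℝ), ENNReal.ofReal (max (k u - t) 0) := by
        apply add_le_add
        · rw [Real.volume_Ioo, mul_comm]
          apply mul_le_mul_left
          exact ENNReal.ofReal_le_ofReal (by linarith)
        · exact lintegral_mono_set fun u hu => hu.1

theorem Bstep (k : ℝ → ℝ) (s t : ℝ) (ht : 0 ≤ t)
    (hk : ∀ u ∈ Ioo (0:ℝ) s, t ≤ k u) :
    ∫⁻ u in Ioo (0:ℝ) s, ENNReal.ofReal (k u) =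
      ENNReal.ofReal s * ENNReal.ofReal t +
        ∫⁻ u in Ioo (0:ℝ) s, ENNReal.ofReal (max (k u - t) 0) := by
  rcases le_or_gt s 0 with hs | hs
  · rw [Ioo_eq_empty (not_lt.mpr hs)]
    simp [Measure.restrict_empty, ENNReal.ofReal_of_nonpos hs]
  have hcongr : ∫⁻ u in Ioo (0:ℝ) s, ENNReal.ofReal (k u) =
      ∫⁻ u in Ioo (0:ℝ) s,
        (ENNReal.ofReal t + ENNReal.ofReal (max (k u - t) 0)) := by
    apply setLIntegral_congr_fun_ae measurableSet_Ioo
    apply Filter.Eventually.of_forall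
    intro u hu
    rw [max_eq_left (by linarith [hk u hu]), ← ENNReal.ofReal_add ht (by linarith [hk u hu])]
    congr 1
    ring
  rw [hcongr, lintegral_add_left measurable_const, setLIntegral_const]
  congr 1
  rw [Real.volume_Ioo, sub_zero, mul_comm]


end StmtAux

open StmtAux in
theorem stmt_12 {α : Type*} [MeasurableSpace α] (μ : Measure α) [SigmaFinite μ]
    (f g : α → ℝ) (hfm : Measurable f) (hgm : Measurable g)
    (hf0 : ∀ x, 0 ≤ f x) (hg0 : ∀ x, 0 ≤ g x)
    (hf : ∃ f₁ f₂ : α → ℝ, f = f₁ + f₂ ∧ MemLp f₁ 1 μ ∧ MemLp f₂ ⊤ μ)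
    (hg : ∃ g₁ g₂ : α → ℝ, g = g₁ + g₂ ∧ MemLp g₁ 1 μ ∧ MemLp g₂ ⊤ μ) :
    (∀ s > (0:ℝ),
        ∫⁻ u in Set.Ioo (0:ℝ) s, ENNReal.ofReal (decRearr μ g u) ≤
          ∫⁻ u in Set.Ioo (0:ℝ) s, ENNReal.ofReal (decRearr μ f u)) ↔
      (∀ t > (0:ℝ),
        ∫⁻ x, ENNReal.ofReal (max (g x - t) 0) ∂μ ≤
          ∫⁻ x, ENNReal.ofReal (max (f x - t) 0) ∂μ) := by
  have hneF := tail_small μ hfm hf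
  have hneG := tail_small μ hgm hg
  have LCf : ∀ t : ℝ, 0 ≤ t →
      ∫⁻ u in Ioi (0:ℝ), ENNReal.ofReal (max (decRearr μ f u - t) 0) =
        ∫⁻ x, ENNReal.ofReal (max (f x - t) 0) ∂μ :=
    fun t ht => layercake μ hf0 hfm hneF ht
  have LCg : ∀ t : ℝ, 0 ≤ t →
      ∫⁻ u in Ioi (0:ℝ), ENNReal.ofReal (max (decRearr μ g u - t) 0) =
        ∫⁻ x, ENNReal.ofReal (max (g x - t) 0) ∂μ :=
    fun t ht => layercake μ hg0 hgm hneG ht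
  constructor
  · -- submajorization implies (·-t)₊ comparison
    intro H1 t ht
    rw [← LCf t ht.le, ← LCg t ht.le]
    set B := ∫⁻ u in Ioi (0:ℝ), ENNReal.ofReal (max (decRearr μ f u - t) 0) with hB
    have key : ∀ m : ℝ, 0 < m → (∀ u ∈ Ioo (0:ℝ) m, t ≤ decRearr μ g u) →
        ∫⁻ u in Ioo (0:ℝ) m, ENNReal.ofReal (max (decRearr μ g u - t) 0) ≤ B := by
      intro m hm hgt
      have hBg := Bstep (decRearr μ g) m t ht.le hgt
      have hAf := Astep (decRearr μ f) m t ht.le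
      have hcmp := H1 m hm
      have hfin : ENNReal.ofReal m * ENNReal.ofReal t ≠ ∞ :=
        ENNReal.mul_ne_top ENNReal.ofReal_ne_top ENNReal.ofReal_ne_top
      rw [← ENNReal.add_le_add_iff_left hfin]
      calc ENNReal.ofReal m * ENNReal.ofReal t +
            ∫⁻ u in Ioo (0:ℝ) m, ENNReal.ofReal (max (decRearr μ g u - t) 0)
          = ∫⁻ u in Ioo (0:ℝ) m, ENNReal.ofReal (decRearr μ g u) := hBg.symm
        _ ≤ ∫⁻ u in Ioo (0:ℝ) m, ENNReal.ofReal (decRearr μ f u) := hcmp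
        _ ≤ ENNReal.ofReal m * ENNReal.ofReal t +
            ∫⁻ u in Ioi (0:ℝ), ENNReal.ofReal (max (decRearr μ f u - t) 0) := hAf
    have hzero : ∀ u : ℝ, 0 < u → D μ g t ≤ ENNReal.ofReal u →
        ENNReal.ofReal (max (decRearr μ g u - t) 0) = 0 := by
      intro u hu hle
      have : decRearr μ g u ≤ t := (rearr_le_iff μ hg0 hneG hu ht).mpr hle
      rw [max_eq_right (by linarith), ENNReal.ofReal_zero]
    have claim : ∀ s : ℝ,
        ∫⁻ u in Ioo (0:ℝ) s, ENNReal.ofReal (max (decRearr μ g u - t) 0) ≤ B := by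
      intro s
      rcases le_or_gt s 0 with hs | hs
      · rw [Ioo_eq_empty (not_lt.mpr hs), Measure.restrict_empty, lintegral_zero_measure]
        exact zero_le
      rcases le_or_gt (ENNReal.ofReal s) (D μ g t) with hcase | hcase
      · apply key s hs
        intro u hu
        have hlt : ENNReal.ofReal u < D μ g t :=
          lt_of_lt_of_le ((ENNReal.ofReal_lt_ofReal_iff hs).mpr hu.2) hcase
        exact ((rearr_lt_iff μ hg0 hneG hu.1 ht).mpr hlt).le
      · have haf : D μ g t ≠ ∞ := (hcase.trans ENNReal.ofReal_lt_top).ne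
        set r := (D μ g t).toReal with hr
        have hrs : r < s := ENNReal.toReal_lt_of_lt_ofReal hcase
        have hr0 : 0 ≤ r := ENNReal.toReal_nonneg
        have hsubset : Ioo (0:ℝ) s ⊆ Ioo 0 r ∪ Ico r s := by
          intro u hu
          rcases lt_or_ge u r with h' | h'
          · exact Or.inl ⟨hu.1, h'⟩
          · exact Or.inr ⟨h', hu.2⟩
        have hae0 : ∀ᵐ u : ℝ, u ≠ (0:ℝ) := by
          rw [ae_iff]
          simp only [ne_eq, not_not]
          have : {u : ℝ | u = 0} = {(0:ℝ)} := by ext u; simp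
          rw [this]
          exact Real.volume_singleton
        have hIco : ∫⁻ u in Ico r s, ENNReal.ofReal (max (decRearr μ g u - t) 0) = 0 := by
          refine (setLIntegral_congr_fun_ae measurableSet_Ico ?_).trans lintegral_zero
          filter_upwards [hae0] with u hu0 hu
          have hupos : 0 < u := lt_of_le_of_ne (le_trans hr0 hu.1) (Ne.symm hu0)
          exact hzero u hupos
            (by rw [← ENNReal.ofReal_toReal haf]; exact ENNReal.ofReal_le_ofReal hu.1)
        calc ∫⁻ u in Ioo (0:ℝ) s, ENNReal.ofReal (max (decRearr μ g u - t) 0)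
            ≤ ∫⁻ u in Ioo (0:ℝ) r ∪ Ico r s,
                ENNReal.ofReal (max (decRearr μ g u - t) 0) := lintegral_mono_set hsubset
          _ ≤ (∫⁻ u in Ioo (0:ℝ) r, ENNReal.ofReal (max (decRearr μ g u - t) 0)) +
                ∫⁻ u in Ico r s, ENNReal.ofReal (max (decRearr μ g u - t) 0) :=
              lintegral_union_le _ _ _
          _ = ∫⁻ u in Ioo (0:ℝ) r, ENNReal.ofReal (max (decRearr μ g u - t) 0) := by
              rw [hIco, add_zero]
          _ ≤ B := by
              rcases le_or_gt r 0 with hr' | hr'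
              · rw [Ioo_eq_empty (not_lt.mpr hr'), Measure.restrict_empty,
                  lintegral_zero_measure]
                exact zero_le
              · apply key r hr'
                intro u hu
                have hlt : ENNReal.ofReal u < D μ g t := by
                  rw [← ENNReal.ofReal_toReal haf]
                  exact (ENNReal.ofReal_lt_ofReal_iff hr').mpr hu.2
                exact ((rearr_lt_iff μ hg0 hneG hu.1 ht).mpr hlt).le
    have hGm : Measurable fun u : ℝ => ENNReal.ofReal
        (max (Set.indicator (Ioi (0:ℝ)) (decRearr μ g) u - t) 0) :=
      (((rearr_indicator_measurable μ hg0 hneG).sub measurable_const).max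
        measurable_const).ennreal_ofReal
    have hcongrIoi : ∫⁻ u in Ioi (0:ℝ), ENNReal.ofReal (max (decRearr μ g u - t) 0) =
        ∫⁻ u in Ioi (0:ℝ), ENNReal.ofReal
          (max (Set.indicator (Ioi (0:ℝ)) (decRearr μ g) u - t) 0) := by
      apply setLIntegral_congr_fun_ae measurableSet_Ioi
      apply Filter.Eventually.of_forall
      intro u hu
      rw [indicator_of_mem hu]
    rw [hcongrIoi, sup_Ioo _ hGm]
    apply iSup_le
    intro n
    have hcongrN : ∫⁻ u in Ioo (0:ℝ) (n:ℝ), ENNReal.ofReal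
          (max (Set.indicator (Ioi (0:ℝ)) (decRearr μ g) u - t) 0) =
        ∫⁻ u in Ioo (0:ℝ) (n:ℝ), ENNReal.ofReal (max (decRearr μ g u - t) 0) := by
      apply setLIntegral_congr_fun_ae measurableSet_Ioo
      apply Filter.Eventually.of_forall
      intro u hu
      rw [indicator_of_mem (mem_Ioi.mpr hu.1)]
    rw [hcongrN]
    exact claim n
  · -- (·-t)₊ comparison implies submajorization
    intro H2 s hs
    set t₀ := decRearr μ f s with ht₀def
    have ht₀0 : 0 ≤ t₀ := rearr_nonneg μ s
    have hdisj : Disjoint (Ioo (0:ℝ) s) (Ici s) :=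
      disjoint_left.mpr fun u hu hu' => absurd hu.2 (not_lt.mpr hu')
    have htail : ∀ t' : ℝ, t₀ ≤ t' →
        ∫⁻ u in Ioi (0:ℝ), ENNReal.ofReal (max (decRearr μ f u - t') 0) =
          ∫⁻ u in Ioo (0:ℝ) s, ENNReal.ofReal (max (decRearr μ f u - t') 0) := by
      intro t' ht'
      rw [← Ioo_union_Ici_eq_Ioi hs, lintegral_union measurableSet_Ici hdisj]
      have hzero : ∫⁻ u in Ici s, ENNReal.ofReal (max (decRearr μ f u - t') 0) = 0 := by
        refine (setLIntegral_congr_fun_ae measurableSet_Ici ?_).trans lintegral_zero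
        apply Filter.Eventually.of_forall
        intro u hu
        have : decRearr μ f u ≤ t₀ := rearr_anti μ hf0 hneF hs hu
        rw [max_eq_right (by linarith), ENNReal.ofReal_zero]
      rw [hzero, add_zero]
    have hk : ∀ u ∈ Ioo (0:ℝ) s, t₀ ≤ decRearr μ f u :=
      fun u hu => rearr_anti μ hf0 hneF hu.1 hu.2.le
    rcases lt_or_eq_of_le ht₀0 with h0 | h0
    · calc ∫⁻ u in Ioo (0:ℝ) s, ENNReal.ofReal (decRearr μ g u)
          ≤ ENNReal.ofReal s * ENNReal.ofReal t₀ +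
              ∫⁻ u in Ioi (0:ℝ), ENNReal.ofReal (max (decRearr μ g u - t₀) 0) :=
            Astep _ s t₀ ht₀0
        _ = ENNReal.ofReal s * ENNReal.ofReal t₀ +
              ∫⁻ x, ENNReal.ofReal (max (g x - t₀) 0) ∂μ := by rw [LCg t₀ ht₀0]
        _ ≤ ENNReal.ofReal s * ENNReal.ofReal t₀ +
              ∫⁻ x, ENNReal.ofReal (max (f x - t₀) 0) ∂μ :=
            add_le_add_right (H2 t₀ h0) _
        _ = ENNReal.ofReal s * ENNReal.ofReal t₀ +
              ∫⁻ u in Ioi (0:ℝ), ENNReal.ofReal (max (decRearr μ f u - t₀) 0) := by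
            rw [LCf t₀ ht₀0]
        _ = ENNReal.ofReal s * ENNReal.ofReal t₀ +
              ∫⁻ u in Ioo (0:ℝ) s, ENNReal.ofReal (max (decRearr μ f u - t₀) 0) := by
            rw [htail t₀ le_rfl]
        _ = ∫⁻ u in Ioo (0:ℝ) s, ENNReal.ofReal (decRearr μ f u) :=
            (Bstep _ s t₀ ht₀0 hk).symm
    · apply ENNReal.le_of_forall_pos_le_add
      intro ε hε _
      set t := (ε:ℝ) / (s+1) with htdef
      have ht : 0 < t := div_pos (by exact_mod_cast hε) (by linarith)
      have hsmall : ENNReal.ofReal s * ENNReal.ofReal t ≤ (ε : ℝ≥0∞) := by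
        rw [← ENNReal.ofReal_mul hs.le, ← ENNReal.ofReal_coe_nnreal]
        apply ENNReal.ofReal_le_ofReal
        show s * ((ε:ℝ) / (s + 1)) ≤ (ε:ℝ)
        rw [mul_div_assoc', div_le_iff₀ (by linarith : (0:ℝ) < s + 1)]
        have hε' : (0:ℝ) ≤ (ε:ℝ) := (ε : ℝ≥0).coe_nonneg
        nlinarith
      calc ∫⁻ u in Ioo (0:ℝ) s, ENNReal.ofReal (decRearr μ g u)
          ≤ ENNReal.ofReal s * ENNReal.ofReal t +
              ∫⁻ u in Ioi (0:ℝ), ENNReal.ofReal (max (decRearr μ g u - t) 0) :=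
            Astep _ s t ht.le
        _ = ENNReal.ofReal s * ENNReal.ofReal t +
              ∫⁻ x, ENNReal.ofReal (max (g x - t) 0) ∂μ := by rw [LCg t ht.le]
        _ ≤ ENNReal.ofReal s * ENNReal.ofReal t +
              ∫⁻ x, ENNReal.ofReal (max (f x - t) 0) ∂μ :=
            add_le_add_right (H2 t ht) _
        _ = ENNReal.ofReal s * ENNReal.ofReal t +
              ∫⁻ u in Ioi (0:ℝ), ENNReal.ofReal (max (decRearr μ f u - t) 0) := by
            rw [LCf t ht.le]
        _ = ENNReal.ofReal s * ENNReal.ofReal t +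
              ∫⁻ u in Ioo (0:ℝ) s, ENNReal.ofReal (max (decRearr μ f u - t) 0) := by
            rw [htail t (by rw [← h0]; exact ht.le)]
        _ ≤ ENNReal.ofReal s * ENNReal.ofReal t +
              ∫⁻ u in Ioo (0:ℝ) s, ENNReal.ofReal (decRearr μ f u) := by
            apply add_le_add_right
            apply lintegral_mono
            intro u
            apply ENNReal.ofReal_le_ofReal
            exact max_le (sub_le_self _ ht.le) (rearr_nonneg μ u)
        _ ≤ (∫⁻ u in Ioo (0:ℝ) s, ENNReal.ofReal (decRearr μ f u)) + ε := by
            rw [add_comm]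
            exact add_le_add_right hsmall _
end

section
/- Let q > 0 and define Φ(t) = t²·log(1 + t^q) for t ≥ 0. Then Φ is 2-convex, i.e. the function t ↦ Φ(√t) = t·log(1 + t^{q/2}) is convex on [0,∞), and Φ is (2+q)-concave, i.e. the function t ↦ Φ(t^{1/(2+q)}) = t^{2/(2+q)}·log(1 + t^{q/(2+q)}) is concave on [0,∞). -/
open Real Set

private lemma key_log (u v : ℝ) (hu : 0 < u) (huv : u ≤ v) :
    u * Real.log (1 + v) ≤ v * Real.log (1 + u) := by
  have hv : 0 < v := lt_of_lt_of_le hu huv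
  have hcc := strictConcaveOn_log_Ioi.concaveOn
  have h1 : (1:ℝ) ∈ Ioi (0:ℝ) := by norm_num
  have h2 : (1+v) ∈ Ioi (0:ℝ) := by simp; linarith
  have ha : 0 ≤ 1 - u/v := by
    have : u/v ≤ 1 := (div_le_one hv).mpr huv
    linarith
  have hb : 0 ≤ u/v := by positivity
  have hab : (1 - u/v) + u/v = 1 := by ring
  have hkey := hcc.2 h1 h2 ha hb hab
  simp only [smul_eq_mul, Real.log_one, mul_zero, zero_add, mul_one] at hkey
  have harg : 1 - u/v + u/v * (1+v) = 1 + u := by field_simp; ring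
  rw [harg] at hkey
  rw [div_mul_eq_mul_div] at hkey
  have := (div_le_iff₀ hv).mp hkey
  linarith

private lemma part1 (r : ℝ) (hr : 0 < r) :
    ConvexOn ℝ (Ici (0:ℝ)) (fun t => t * Real.log (1 + t ^ r)) := by
  have hpos : ∀ t : ℝ, 0 ≤ t → 0 < 1 + t ^ r := by
    intro t ht
    have := Real.rpow_nonneg ht r
    linarith
  have hderiv : ∀ t : ℝ, 0 < t → HasDerivAt (fun t => t * Real.log (1 + t ^ r))
      (Real.log (1 + t ^ r) + r * t ^ r / (1 + t ^ r)) t := by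
    intro t ht
    have h1 : HasDerivAt (fun x : ℝ => x ^ r) (r * t ^ (r-1)) t :=
      Real.hasDerivAt_rpow_const (Or.inl ht.ne')
    have h2 : HasDerivAt (fun x : ℝ => 1 + x ^ r) (r * t ^ (r-1)) t := h1.const_add 1
    have h3 : HasDerivAt (fun x : ℝ => Real.log (1 + x ^ r)) ((r * t ^ (r-1)) / (1 + t ^ r)) t :=
      h2.log (hpos t ht.le).ne'
    have h4 : HasDerivAt (fun t : ℝ => t * Real.log (1 + t ^ r)) _ t := (hasDerivAt_id t).mul h3
    have htr : t * t ^ (r - 1) = t ^ r := by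
      rw [Real.rpow_sub ht, Real.rpow_one]
      field_simp
    convert h4 using 1
    simp only [id_eq, one_mul]
    rw [← htr]
    ring
  refine MonotoneOn.convexOn_of_deriv (convex_Ici 0) ?_ ?_ ?_
  · -- continuity
    intro t ht
    have hc1 : ContinuousAt (fun x : ℝ => x ^ r) t :=
      Real.continuousAt_rpow_const t r (Or.inr hr.le)
    have hc2 : ContinuousAt (fun x : ℝ => Real.log (1 + x ^ r)) t :=
      (continuousAt_const.add hc1).log (hpos t ht).ne'
    exact ((continuousAt_id.mul hc2)).continuousWithinAt
  · rw [interior_Ici]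
    intro t ht
    exact ((hderiv t ht).differentiableAt).differentiableWithinAt
  · rw [interior_Ici]
    intro x hx y hy hxy
    rw [(hderiv x hx).deriv, (hderiv y hy).deriv]
    have hxr : (0:ℝ) ≤ x ^ r := Real.rpow_nonneg (le_of_lt hx) r
    have hle : x ^ r ≤ y ^ r := Real.rpow_le_rpow (le_of_lt hx) hxy hr.le
    have h1 : Real.log (1 + x ^ r) ≤ Real.log (1 + y ^ r) :=
      Real.log_le_log (by linarith) (by linarith)
    have h2 : r * x ^ r / (1 + x ^ r) ≤ r * y ^ r / (1 + y ^ r) := by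
      rw [div_le_div_iff₀ (by linarith) (by linarith)]
      nlinarith
    linarith

private lemma part2 (b : ℝ) (hb0 : 0 < b) (hb1 : b < 1) :
    ConcaveOn ℝ (Ici (0:ℝ)) (fun s => s ^ (1-b) * Real.log (1 + s ^ b)) := by
  have hpos : ∀ t : ℝ, 0 ≤ t → 0 < 1 + t ^ b := by
    intro t ht
    have := Real.rpow_nonneg ht b
    linarith
  have hderiv : ∀ s : ℝ, 0 < s → HasDerivAt (fun s : ℝ => s ^ (1-b) * Real.log (1 + s ^ b))
      ((1-b) * (Real.log (1 + s ^ b) / s ^ b) + b / (1 + s ^ b)) s := by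
    intro s hs
    have hA : HasDerivAt (fun x : ℝ => x ^ (1-b)) ((1-b) * s ^ (1-b-1)) s :=
      Real.hasDerivAt_rpow_const (Or.inl hs.ne')
    have h1 : HasDerivAt (fun x : ℝ => x ^ b) (b * s ^ (b-1)) s :=
      Real.hasDerivAt_rpow_const (Or.inl hs.ne')
    have h3 : HasDerivAt (fun x : ℝ => Real.log (1 + x ^ b)) ((b * s ^ (b-1)) / (1 + s ^ b)) s :=
      (h1.const_add 1).log (hpos s hs.le).ne'
    have h4 : HasDerivAt (fun s : ℝ => s ^ (1-b) * Real.log (1 + s ^ b)) _ s := hA.mul h3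
    have e1 : s ^ (1-b) * s ^ (b-1) = 1 := by
      rw [← Real.rpow_add hs]; norm_num
    have e2 : s ^ (1-b-1) = (s ^ b)⁻¹ := by
      rw [show (1-b)-1 = -b by ring, Real.rpow_neg hs.le]
    have e3 : s ^ (1-b) * (b * s ^ (b-1) / (1 + s ^ b)) = b / (1 + s ^ b) := by
      have h : s ^ (1-b) * (b * s ^ (b-1)) = b := by
        rw [show s ^ (1-b) * (b * s ^ (b-1)) = b * (s ^ (1-b) * s ^ (b-1)) by ring, e1, mul_one]
      calc s ^ (1-b) * (b * s ^ (b-1) / (1 + s ^ b))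
          = s ^ (1-b) * (b * s ^ (b-1)) / (1 + s ^ b) := by ring
        _ = b / (1 + s ^ b) := by rw [h]
    convert h4 using 1
    rw [e2, e3, div_eq_mul_inv]
    ring
  refine AntitoneOn.concaveOn_of_deriv (convex_Ici 0) ?_ ?_ ?_
  · intro t ht
    have hc1 : ContinuousAt (fun x : ℝ => x ^ (1-b)) t :=
      Real.continuousAt_rpow_const t (1-b) (Or.inr (by linarith))
    have hc1' : ContinuousAt (fun x : ℝ => x ^ b) t :=
      Real.continuousAt_rpow_const t b (Or.inr hb0.le)
    have hc2 : ContinuousAt (fun x : ℝ => Real.log (1 + x ^ b)) t :=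
      (continuousAt_const.add hc1').log (hpos t ht).ne'
    exact (hc1.mul hc2).continuousWithinAt
  · rw [interior_Ici]
    intro t ht
    exact ((hderiv t ht).differentiableAt).differentiableWithinAt
  · rw [interior_Ici]
    intro x hx y hy hxy
    rw [(hderiv x hx).deriv, (hderiv y hy).deriv]
    have hu : 0 < x ^ b := Real.rpow_pos_of_pos hx b
    have hv : 0 < y ^ b := Real.rpow_pos_of_pos (lt_of_lt_of_le hx hxy) b
    have huv : x ^ b ≤ y ^ b := Real.rpow_le_rpow hx.le hxy hb0.le
    have hk := key_log (x ^ b) (y ^ b) hu huv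
    have hlogu : 0 ≤ Real.log (1 + x ^ b) := Real.log_nonneg (by linarith)
    have h1 : Real.log (1 + y ^ b) / y ^ b ≤ Real.log (1 + x ^ b) / x ^ b := by
      rw [div_le_div_iff₀ hv hu]
      nlinarith
    have h2 : b / (1 + y ^ b) ≤ b / (1 + x ^ b) := by
      gcongr
    nlinarith [mul_le_mul_of_nonneg_left h1 (by linarith : (0:ℝ) ≤ 1 - b)]

private lemma cvx_congr {s : Set ℝ} {f g : ℝ → ℝ}
    (hfg : ∀ x ∈ s, f x = g x) (hg : ConvexOn ℝ s g) : ConvexOn ℝ s f :=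
  ⟨hg.1, fun x hx y hy a b ha hb hab => by
    rw [hfg _ hx, hfg _ hy, hfg _ (hg.1 hx hy ha hb hab)]
    exact hg.2 hx hy ha hb hab⟩

private lemma ccv_congr {s : Set ℝ} {f g : ℝ → ℝ}
    (hfg : ∀ x ∈ s, f x = g x) (hg : ConcaveOn ℝ s g) : ConcaveOn ℝ s f :=
  ⟨hg.1, fun x hx y hy a b ha hb hab => by
    rw [hfg _ hx, hfg _ hy, hfg _ (hg.1 hx hy ha hb hab)]
    exact hg.2 hx hy ha hb hab⟩

theorem stmt_19 (q : ℝ) (hq : 0 < q)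
    (Φ : ℝ → ℝ) (hΦ : ∀ t : ℝ, 0 ≤ t → Φ t = t ^ 2 * Real.log (1 + t ^ q)) :
    ConvexOn ℝ (Set.Ici (0:ℝ)) (fun t => Φ (Real.sqrt t)) ∧
    ConcaveOn ℝ (Set.Ici (0:ℝ)) (fun t => Φ (t ^ (1 / (2 + q)))) := by
  have h2q : (0:ℝ) < 2 + q := by linarith
  constructor
  · refine cvx_congr (g := fun t => t * Real.log (1 + t ^ (q/2))) ?_ (part1 (q/2) (by linarith))
    intro t ht
    rw [hΦ _ (Real.sqrt_nonneg t), Real.sq_sqrt ht, Real.sqrt_eq_rpow, ← Real.rpow_mul ht]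
    rw [show (1/2:ℝ) * q = q / 2 by ring]
  · set b := q / (2 + q) with hb
    have hb0 : 0 < b := by positivity
    have hb1 : b < 1 := (div_lt_one h2q).mpr (by linarith)
    refine ccv_congr (g := fun s => s ^ (1-b) * Real.log (1 + s ^ b)) ?_ (part2 b hb0 hb1)
    intro t ht
    have hx : (0:ℝ) ≤ t ^ (1/(2+q)) := Real.rpow_nonneg ht _
    rw [hΦ _ hx]
    have e1 : (t ^ (1/(2+q))) ^ (2:ℕ) = t ^ (1-b) := by
      rw [← Real.rpow_natCast (t ^ (1/(2+q))) 2, ← Real.rpow_mul ht]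
      congr 1
      push_cast
      rw [hb]
      field_simp
      ring
    have e2 : (t ^ (1/(2+q))) ^ q = t ^ b := by
      rw [← Real.rpow_mul ht]
      congr 1
      rw [hb]
      field_simp
    rw [e1, e2]
end
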